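/- Let K be a subgroup of SL(2, ℤ/5ℤ) of order 24, and let θ and θ′ be irreducible three-dimensional complex representations of SL(2, ℤ/5ℤ). Then the restrictions of θ and θ′ to K are irreducible and are isomorphic to each other as representations of K. -/

import Mathlib

open scoped TensorProduct

/-- A submodule `p` is a subrepresentation of `ρ` if it is stable under the action. -/
def IsSubrep {k G V : Type*} [CommSemiring k] [Monoid G] [AddCommMonoid V] [Module k V]
    (ρ : Representation k G V) (p : Submodule k V) : Prop :=
  ∀ g : G, ∀ v ∈ p, ρ g v ∈ p

/-- A representation is irreducible if it is nonzero and has no proper nonzero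
subrepresentations. -/
def IsIrreducibleRep {k G V : Type*} [CommSemiring k] [Monoid G] [AddCommMonoid V] [Module k V]
    (ρ : Representation k G V) : Prop :=
  Nontrivial V ∧ ∀ p : Submodule k V, IsSubrep ρ p → p = ⊥ ∨ p = ⊤

/-- Two representations are isomorphic if there is an equivariant linear equivalence. -/
def RepIso {k G V W : Type*} [CommSemiring k] [Monoid G] [AddCommMonoid V] [Module k V]
    [AddCommMonoid W] [Module k W]
    (ρ : Representation k G V) (σ : Representation k G W) : Prop :=
  ∃ e : V ≃ₗ[k] W, ∀ (g : G) (v : V), e (ρ g v) = σ g (e v)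

namespace SL25Aux

abbrev G := Matrix.SpecialLinearGroup (Fin 2) (ZMod 5)
abbrev V3 := Fin 3 → ℂ

set_option maxRecDepth 100000

instance : DecidableEq G := fun a b => decidable_of_iff (a.val = b.val) Subtype.ext_iff.symm
instance : Fintype G := Subtype.fintype _

def r3 : G := ⟨!![0,1;-1,-1], by decide⟩
def r4 : G := ⟨!![0,1;-1,0], by decide⟩
def r5 : G := ⟨!![1,1;0,1], by decide⟩
def wa1 : G := ⟨!![0,1;-1,1], by decide⟩
def wb1 : G := ⟨!![0,1;-1,3], by decide⟩
def wa2 : G := ⟨!![1,0;1,1], by decide⟩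
def wd : G := ⟨!![2,0;0,3], by decide⟩
def ws : G := ⟨!![1,2;0,1], by decide⟩

section DecideFacts

lemma hF1 : ∀ g : G, g^2 = 1 → g = 1 ∨ g = -1 := by decide
lemma hOrd : ∀ k : G, k = 1 ∨ k = -1 ∨ k^2 = -1 ∨ k^3 = 1 ∨ k^3 = -1 ∨ k^5 = 1 ∨ k^10 = 1 := by
  decide

lemma hD1 : ∀ g : G, g^24 = 1 → g = 1 ∨ g = -1 ∨ g^2 = -1 ∨ g^3 = 1 ∨ g^3 = -1 := by
  intro g h24
  rcases hOrd g with h | h | h | h | h | h | h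
  · exact Or.inl h
  · exact Or.inr (Or.inl h)
  · exact Or.inr (Or.inr (Or.inl h))
  · exact Or.inr (Or.inr (Or.inr (Or.inl h)))
  · exact Or.inr (Or.inr (Or.inr (Or.inr h)))
  · -- g^5 = 1 and g^24 = 1 imply g = 1
    left
    calc g = g^25 * (g^24)⁻¹ := by group
    _ = (g^5)^5 * (g^24)⁻¹ := by rw [← pow_mul]
    _ = 1 := by rw [h, h24, one_pow, inv_one, mul_one]
  · -- g^10 = 1 and g^24 = 1 imply g^2 = 1, so g = ±1
    have h2 : g^2 = 1 := by
      calc g^2 = g^50 * (g^48)⁻¹ := by group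
      _ = (g^10)^5 * ((g^24)^2)⁻¹ := by rw [← pow_mul, ← pow_mul]
      _ = 1 := by rw [h, h24, one_pow, one_pow, inv_one, mul_one]
    rcases hF1 g h2 with h | h
    · exact Or.inl h
    · exact Or.inr (Or.inl h)
lemma hC4 : ∀ x : G, x^2 = -1 → ∃ a : G, x = a*r4*a⁻¹ := by decide
lemma hC3 : ∀ x : G, x^3 = 1 → x ≠ 1 → ∃ a : G, x = a*r3*a⁻¹ := by decide
lemma hC5 : ∀ x : G, x^5 = 1 → x ≠ 1 → ∃ a : G, x = a*r5*a⁻¹ ∨ x = a*(r5*r5)*a⁻¹ := by decide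
lemma hCov : ∀ g : G, ∃ x : G, x^2 = -1 ∧ (x⁻¹*g)^2 = -1 := by decide
lemma hW1 : (wa1*r3*wa1⁻¹)*(wb1*r3*wb1⁻¹) = r4 := by decide
lemma hW2 : (wa2*r5*wa2⁻¹)*(r5*r5) = r4 := by decide
lemma hW3 : (r5*r5)*((r5*r5)*(r5*r5)) = r5 := by decide
lemma hComm : r5 = wd*ws*wd⁻¹*ws⁻¹ := by decide
lemma hne1 : (1:G) ≠ -1 := by decide
lemma hr5ne1 : r5 ≠ 1 := by decide
lemma hr5nen1 : r5 ≠ -1 := by decide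
lemma hcentral : ∀ g : G, (-1)*g = g*(-1) := by decide
lemma hn1inv : (-1 : G)⁻¹ = -1 := by decide
lemma hn1sq : (-1 : G)^2 = 1 := by decide
lemma hn1cube : (-1 : G)^3 = -1 := by decide

end DecideFacts

/-- Any predicate containing a noncentral element and closed under products and conjugation
holds everywhere on `SL(2,5)`. -/
lemma simpG (P : G → Prop) (hmul : ∀ a b, P a → P b → P (a*b))
    (hconj : ∀ g a, P a → P (g*a*g⁻¹)) (k : G) (hk1 : k ≠ 1) (hk2 : k ≠ -1) (hPk : P k) :
    ∀ g, P g := by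
  have hconj' : ∀ (a x : G), P x → P (a⁻¹*x*a) := fun a x h => by
    simpa using hconj a⁻¹ x h
  have hofeq : ∀ (x a : G), P x → x = a*r4*a⁻¹ → P r4 := by
    intro x a hx he
    have h2 : a⁻¹*x*a = r4 := by rw [he]; group
    exact h2 ▸ hconj' a x hx
  have hofeq3 : ∀ (x a : G), P x → x = a*r3*a⁻¹ → P r3 := by
    intro x a hx he
    have h2 : a⁻¹*x*a = r3 := by rw [he]; group
    exact h2 ▸ hconj' a x hx
  have hr3r4 : P r3 → P r4 := fun h => hW1 ▸ hmul _ _ (hconj wa1 _ h) (hconj wb1 _ h)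
  have hr5r4 : P r5 → P r4 := fun h => hW2 ▸ hmul _ _ (hconj wa2 _ h) (hmul _ _ h h)
  have hr52r4 : P (r5*r5) → P r4 := fun h => hr5r4 (hW3 ▸ hmul _ _ h (hmul _ _ h h))
  have hsq : ∀ x : G, P x → P (x^2) := fun x h => by rw [pow_two]; exact hmul _ _ h h
  have hsqne1 : ∀ x : G, x ≠ 1 → x ≠ -1 → x^2 ≠ 1 := by
    intro x h1 h2 hc
    rcases hF1 x hc with h | h
    exacts [h1 h, h2 h]
  have hcase5 : ∀ x : G, P x → x^5 = 1 → x ≠ 1 → P r4 := by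
    intro x hx h5 hx1
    obtain ⟨a, ha | ha⟩ := hC5 x h5 hx1
    · refine hr5r4 ?_
      have h2 : a⁻¹*x*a = r5 := by rw [ha]; group
      exact h2 ▸ hconj' a x hx
    · refine hr52r4 ?_
      have h2 : a⁻¹*x*a = r5*r5 := by rw [ha]; group
      exact h2 ▸ hconj' a x hx
  -- Step 1 : P r4
  have hPr4 : P r4 := by
    rcases hOrd k with h | h | h | h | h | h | h
    · exact absurd h hk1
    · exact absurd h hk2
    · obtain ⟨a, ha⟩ := hC4 k h
      exact hofeq k a hPk ha
    · obtain ⟨a, ha⟩ := hC3 k h hk1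
      exact hr3r4 (hofeq3 k a hPk ha)
    · have h6 : (k^2)^3 = 1 := by
        have : (k^2)^3 = (k^3)^2 := by group
        rw [this, h, hn1sq]
      obtain ⟨a, ha⟩ := hC3 (k^2) h6 (hsqne1 k hk1 hk2)
      exact hr3r4 (hofeq3 (k^2) a (hsq k hPk) ha)
    · exact hcase5 k hPk h hk1
    · have h5 : (k^2)^5 = 1 := by rw [← pow_mul]; exact h
      exact hcase5 (k^2) (hsq k hPk) h5 (hsqne1 k hk1 hk2)
  -- Step 2 : everything
  intro g
  obtain ⟨x, hx, hxg⟩ := hCov g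
  obtain ⟨a, ha⟩ := hC4 x hx
  obtain ⟨b, hb⟩ := hC4 _ hxg
  have hPx : P x := by rw [ha]; exact hconj a _ hPr4
  have hPy : P (x⁻¹ * g) := by rw [hb]; exact hconj b _ hPr4
  have hgx : g = x * (x⁻¹ * g) := by group
  rw [hgx]
  exact hmul _ _ hPx hPy

section Reps

variable {V : Type*} [AddCommGroup V] [Module ℂ V]

/-- On a perfect group like `SL(2,5)`, every representation has determinant `1`. -/
lemma det_rep_eq_one (θ : Representation ℂ G V) (g : G) : LinearMap.det (θ g) = 1 := by
  set f : G →* ℂ := (LinearMap.det : (V →ₗ[ℂ] V) →* ℂ).comp θ with hf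
  have hinv : ∀ a : G, f a * f a⁻¹ = 1 := fun a => by
    rw [← map_mul, mul_inv_cancel, map_one]
  have hmul' : ∀ a b : G, f a = 1 → f b = 1 → f (a*b) = 1 := fun a b ha hb => by
    rw [map_mul, ha, hb, one_mul]
  have hconj' : ∀ g a : G, f a = 1 → f (g*a*g⁻¹) = 1 := fun g a ha => by
    rw [map_mul, map_mul, ha, mul_one, hinv]
  have hseed : f r5 = 1 := by
    rw [hComm, map_mul, map_mul, map_mul]
    calc f wd * f ws * f wd⁻¹ * f ws⁻¹ = (f wd * f wd⁻¹) * (f ws * f ws⁻¹) := by ring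
    _ = 1 := by rw [hinv, hinv, one_mul]
  exact simpG (fun x => f x = 1) hmul' hconj' r5 hr5ne1 hr5nen1 hseed g

/-- In an irreducible representation of dimension `3`, no noncentral element acts
as a scalar. -/
lemma not_scalar (θ : Representation ℂ G V) (hθ : IsIrreducibleRep θ)
    (hdV : Module.finrank ℂ V = 3) (g : G) (hg1 : g ≠ 1) (hg2 : g ≠ -1) (c : ℂ) :
    θ g ≠ c • (1 : Module.End ℂ V) := by
  intro h
  have hmul' : ∀ a b : G, (∃ ca : ℂ, θ a = ca • (1 : Module.End ℂ V)) →
      (∃ cb : ℂ, θ b = cb • (1 : Module.End ℂ V)) →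
      ∃ cc : ℂ, θ (a*b) = cc • (1 : Module.End ℂ V) := by
    rintro a b ⟨ca, ha⟩ ⟨cb, hb⟩
    exact ⟨ca*cb, by rw [map_mul, ha, hb, smul_mul_assoc, mul_smul_comm, mul_one, smul_smul]⟩
  have hconj' : ∀ x a : G, (∃ ca : ℂ, θ a = ca • (1 : Module.End ℂ V)) →
      ∃ cc : ℂ, θ (x*a*x⁻¹) = cc • (1 : Module.End ℂ V) := by
    rintro x a ⟨ca, ha⟩
    refine ⟨ca, ?_⟩
    rw [map_mul, map_mul, ha, mul_smul_comm, smul_mul_assoc, mul_one, ← map_mul,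
      mul_inv_cancel, map_one]
  have hall : ∀ x : G, ∃ c : ℂ, θ x = c • (1 : Module.End ℂ V) :=
    simpG _ hmul' hconj' g hg1 hg2 ⟨c, h⟩
  haveI : Nontrivial V := hθ.1
  obtain ⟨v, hv⟩ := exists_ne (0 : V)
  have hsub : IsSubrep θ (Submodule.span ℂ {v}) := by
    intro x w hw
    obtain ⟨a, rfl⟩ := Submodule.mem_span_singleton.1 hw
    obtain ⟨cx, hcx⟩ := hall x
    rw [map_smul, hcx]
    exact Submodule.smul_mem _ a (Submodule.mem_span_singleton.2 ⟨cx, by simp⟩)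
  rcases hθ.2 _ hsub with hbot | htop
  · have hmem := Submodule.mem_span_singleton_self (R := ℂ) v
    rw [hbot, Submodule.mem_bot] at hmem
    exact hv hmem
  · have h1 : Module.finrank ℂ (Submodule.span ℂ {v}) = 1 := finrank_span_singleton hv
    rw [htop, finrank_top] at h1
    rw [hdV] at h1
    norm_num at h1

/-- Schur: an endomorphism commuting with an irreducible representation is a scalar. -/
lemma schur_scalar [FiniteDimensional ℂ V] (θ : Representation ℂ G V)
    (hθ : IsIrreducibleRep θ) (φ : Module.End ℂ V) (hφ : ∀ g, φ * θ g = θ g * φ) :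
    ∃ c : ℂ, φ = c • (1 : Module.End ℂ V) := by
  haveI : Nontrivial V := hθ.1
  obtain ⟨c, hc⟩ := Module.End.exists_eigenvalue φ
  refine ⟨c, ?_⟩
  have hsub : IsSubrep θ (φ.eigenspace c) := by
    intro g v hv
    rw [Module.End.mem_eigenspace_iff] at hv ⊢
    have := congrArg (fun (ψ : Module.End ℂ V) => ψ v) (hφ g)
    simp only [Module.End.mul_apply] at this
    rw [this, hv, map_smul]
  rcases hθ.2 _ hsub with hbot | htop
  · exact absurd hbot hc
  · ext v
    have hv : v ∈ φ.eigenspace c := htop ▸ Submodule.mem_top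
    rw [Module.End.mem_eigenspace_iff] at hv
    simpa using hv

end Reps


section TraceFacts

abbrev M3 := Matrix (Fin 3) (Fin 3) ℂ

lemma aux_scalar {M : M3} (hs : ∀ c : ℂ, M ≠ c • 1) {a b : ℂ}
    (h : a • M + b • (1 : M3) = 0) : a = 0 ∧ b = 0 := by
  have hb0 : ∀ d : ℂ, d • (1 : M3) = 0 → d = 0 := by
    intro d hd
    have := congrArg Matrix.trace hd
    rw [Matrix.trace_smul, Matrix.trace_one, Matrix.trace_zero] at this
    simp only [Fintype.card_fin, smul_eq_mul, Nat.cast_ofNat] at this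
    have h3 : (3 : ℂ) ≠ 0 := by norm_num
    rcases mul_eq_zero.1 this with h | h
    · exact h
    · exact absurd h h3
  by_cases ha : a = 0
  · subst ha
    rw [zero_smul, zero_add] at h
    exact ⟨rfl, hb0 b h⟩
  · exfalso
    apply hs (a⁻¹ * (-b))
    have hM : a • M = (-b) • (1 : M3) := by
      rw [eq_comm, neg_smul, neg_eq_iff_add_eq_zero, add_comm]; exact h
    calc M = a⁻¹ • (a • M) := by rw [smul_smul, inv_mul_cancel₀ ha, one_smul]
    _ = a⁻¹ • ((-b) • (1 : M3)) := by rw [hM]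
    _ = (a⁻¹ * (-b)) • (1 : M3) := by rw [smul_smul]

lemma charpoly_CH (M : M3) :
    M^3 + (M.charpoly.coeff 2) • M^2 + (M.charpoly.coeff 1) • M
      + (M.charpoly.coeff 0) • (1 : M3) = 0 := by
  have hdeg : M.charpoly.natDegree = 3 := by
    rw [Matrix.charpoly_natDegree_eq_dim, Fintype.card_fin]
  have hsum := M.charpoly_monic.as_sum
  have h0 := Matrix.aeval_self_charpoly M
  rw [hsum, hdeg] at h0
  rw [Finset.sum_range_succ, Finset.sum_range_succ, Finset.sum_range_one] at h0
  simp only [map_add, Polynomial.aeval_X_pow, map_mul, Polynomial.aeval_C,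
    Algebra.algebraMap_eq_smul_one, smul_mul_assoc, one_mul, pow_zero, pow_one,
    Polynomial.aeval_X, map_one] at h0
  rw [← h0]
  abel

lemma coeff0_eq (M : M3) (hd : M.det = 1) : M.charpoly.coeff 0 = -1 := by
  have h1 := Matrix.det_eq_sign_charpoly_coeff M
  rw [hd, Fintype.card_fin] at h1
  have h2 : ((-1 : ℂ))^3 = -1 := by norm_num
  rw [h2] at h1
  linear_combination h1

lemma trace_eq_neg_c2 (M : M3) : M.trace = - M.charpoly.coeff 2 := by
  have := Matrix.trace_eq_neg_charpoly_coeff M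
  rwa [Fintype.card_fin] at this

lemma tr2 (M : M3) (h : M^2 = 1) (hd : M.det = 1) (hs : ∀ c : ℂ, M ≠ c • 1) :
    M.trace = -1 := by
  have hCH := charpoly_CH M
  set c2 := M.charpoly.coeff 2 with hc2def
  set c1 := M.charpoly.coeff 1
  set c0 := M.charpoly.coeff 0 with hc0def
  have h3 : M^3 = M := by rw [pow_succ, h, one_mul]
  rw [h3, h] at hCH
  have hc0 : c0 = -1 := coeff0_eq M hd
  have heq : (1 + c1) • M + (c2 + c0) • (1 : M3) = 0 := by
    rw [add_smul, add_smul, one_smul, ← hCH]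
    abel
  obtain ⟨h1, h2⟩ := aux_scalar hs heq
  have hc2 : c2 = 1 := by rw [hc0] at h2; linear_combination h2
  rw [trace_eq_neg_c2, ← hc2def, hc2]

lemma tr3 (M : M3) (h : M^3 = 1) (hd : M.det = 1) (hs : ∀ c : ℂ, M ≠ c • 1) :
    M.trace = 0 := by
  have hCH := charpoly_CH M
  set c2 := M.charpoly.coeff 2 with hc2def
  set c1 := M.charpoly.coeff 1
  have hc0 : M.charpoly.coeff 0 = -1 := coeff0_eq M hd
  rw [h, hc0, neg_smul, one_smul] at hCH
  have heq : c2 • M^2 + c1 • M = 0 := by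
    rw [← hCH]; abel
  have heq2 : c2 • (1 : M3) + c1 • M^2 = 0 := by
    have h21 : (c2 • M^2 + c1 • M) * M = 0 := by rw [heq, zero_mul]
    rw [add_mul, smul_mul_assoc, smul_mul_assoc, ← pow_succ, ← pow_two, h] at h21
    exact h21
  have heq3 : c2 • M + c1 • (1 : M3) = 0 := by
    have h31 : (c2 • (1:M3) + c1 • M^2) * M = 0 := by rw [heq2, zero_mul]
    rw [add_mul, smul_mul_assoc, smul_mul_assoc, one_mul, ← pow_succ, h] at h31
    exact h31
  obtain ⟨h1, h2⟩ := aux_scalar hs heq3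
  rw [trace_eq_neg_c2, ← hc2def, h1, neg_zero]

noncomputable abbrev tm : Module.End ℂ V3 ≃ₐ[ℂ] M3 := LinearMap.toMatrixAlgEquiv'

lemma tm_trace (A : Module.End ℂ V3) : LinearMap.trace ℂ V3 A = (tm A).trace := by
  rw [LinearMap.trace_eq_matrix_trace ℂ (Pi.basisFun ℂ (Fin 3)), LinearMap.toMatrix_eq_toMatrix']
  rfl

lemma tm_det (A : Module.End ℂ V3) : LinearMap.det A = (tm A).det := by
  rw [← LinearMap.det_toMatrix' A]
  rfl

lemma tm_scalar (A : Module.End ℂ V3) (hs : ∀ c : ℂ, A ≠ c • 1) :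
    ∀ c : ℂ, tm A ≠ c • (1 : M3) := by
  intro c hc
  apply hs c
  apply tm.injective
  rw [hc, map_smul, map_one]

lemma end_tr2 (A : Module.End ℂ V3) (h : A^2 = 1) (hd : LinearMap.det A = 1)
    (hs : ∀ c : ℂ, A ≠ c • 1) : LinearMap.trace ℂ V3 A = -1 := by
  rw [tm_trace]
  exact tr2 _ (by rw [← map_pow, h, map_one]) (by rw [← tm_det, hd]) (tm_scalar A hs)

lemma end_tr3 (A : Module.End ℂ V3) (h : A^3 = 1) (hd : LinearMap.det A = 1)
    (hs : ∀ c : ℂ, A ≠ c • 1) : LinearMap.trace ℂ V3 A = 0 := by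
  rw [tm_trace]
  exact tr3 _ (by rw [← map_pow, h, map_one]) (by rw [← tm_det, hd]) (tm_scalar A hs)

end TraceFacts


section Master

lemma finrank_V3 : Module.finrank ℂ V3 = 3 := Module.finrank_fin_fun ℂ

lemma hn1mul : (-1 : G) * (-1) = 1 := by rw [← pow_two]; exact hn1sq

lemma rho_neg_one (ρ : Representation ℂ G V3) (hρ : IsIrreducibleRep ρ) : ρ (-1) = 1 := by
  obtain ⟨c, hc⟩ := schur_scalar ρ hρ (ρ (-1))
    (fun g => by rw [← map_mul, hcentral, map_mul])
  have hsq : ρ (-1) * ρ (-1) = 1 := by rw [← map_mul, hn1mul, map_one]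
  rw [hc, smul_mul_assoc, mul_smul_comm, one_mul, smul_smul] at hsq
  obtain ⟨v, hv⟩ := exists_ne (0 : V3)
  have hc2 : c * c = 1 := by
    have h := congrArg (fun A : Module.End ℂ V3 => A v) hsq
    simp only [LinearMap.smul_apply, Module.End.one_apply] at h
    have h2 : (c * c - 1) • v = 0 := by rw [sub_smul, one_smul, h, sub_self]
    rcases smul_eq_zero.1 h2 with h3 | h3
    · linear_combination h3
    · exact absurd h3 hv
  have hdet : LinearMap.det (ρ (-1)) = 1 := det_rep_eq_one ρ (-1)
  rw [hc, LinearMap.det_smul, finrank_V3,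
    show LinearMap.det (1 : Module.End ℂ V3) = 1 from map_one _, mul_one] at hdet
  have hc1 : c = 1 := by
    have h3 : c ^ 3 = c * (c * c) := by ring
    rw [h3, hc2, mul_one] at hdet
    exact hdet
  rw [hc, hc1, one_smul]

lemma chi_pair (ρ σ : Representation ℂ G V3) (hρ : IsIrreducibleRep ρ)
    (hσ : IsIrreducibleRep σ) (k : G) (h24 : k ^ 24 = 1) :
    LinearMap.trace ℂ V3 (ρ k⁻¹) * LinearMap.trace ℂ V3 (σ k)
      = if k = 1 ∨ k = -1 then 9 else if k ^ 2 = -1 then 1 else 0 := by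
  have hρn := rho_neg_one ρ hρ
  have hσn := rho_neg_one σ hσ
  by_cases h1 : k = 1 ∨ k = -1
  · rw [if_pos h1]
    rcases h1 with rfl | rfl
    · rw [inv_one, ρ.map_one, σ.map_one, LinearMap.trace_one, finrank_V3]
      norm_num
    · rw [hn1inv, hρn, hσn, LinearMap.trace_one, finrank_V3]
      norm_num
  · push_neg at h1
    obtain ⟨hk1, hk2⟩ := h1
    have hki1 : k⁻¹ ≠ 1 := fun h => hk1 (by rw [← inv_inv k, h, inv_one])
    have hki2 : k⁻¹ ≠ -1 := fun h => hk2 (by rw [← inv_inv k, h, hn1inv])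
    by_cases h4 : k ^ 2 = -1
    · rw [if_neg (not_or.mpr ⟨hk1, hk2⟩), if_pos h4]
      have hA : (ρ k⁻¹) ^ 2 = 1 := by
        rw [← map_pow, inv_pow, h4, hn1inv, hρn]
      have hB : (σ k) ^ 2 = 1 := by
        rw [← map_pow, h4, hσn]
      have ht1 : LinearMap.trace ℂ V3 (ρ k⁻¹) = -1 :=
        end_tr2 _ hA (det_rep_eq_one ρ _) (not_scalar ρ hρ finrank_V3 _ hki1 hki2)
      have ht2 : LinearMap.trace ℂ V3 (σ k) = -1 :=
        end_tr2 _ hB (det_rep_eq_one σ _) (not_scalar σ hσ finrank_V3 _ hk1 hk2)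
      rw [ht1, ht2]
      norm_num
    · rw [if_neg (not_or.mpr ⟨hk1, hk2⟩), if_neg h4]
      have hB : (σ k) ^ 3 = 1 := by
        rcases hD1 k h24 with h | h | h | h | h
        · exact absurd h hk1
        · exact absurd h hk2
        · exact absurd h h4
        · rw [← map_pow, h, map_one]
        · rw [← map_pow, h, hσn]
      have ht2 : LinearMap.trace ℂ V3 (σ k) = 0 :=
        end_tr3 _ hB (det_rep_eq_one σ _) (not_scalar σ hσ finrank_V3 _ hk1 hk2)
      rw [ht2, mul_zero]

lemma key (K : Subgroup G) [Fintype ↥K] (hcard : Fintype.card ↥K = 24)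
    (ρ σ : Representation ℂ G V3) (hρ : IsIrreducibleRep ρ) (hσ : IsIrreducibleRep σ) :
    24 * Module.finrank ℂ
        (Representation.linHom (ρ.comp K.subtype) (σ.comp K.subtype)).invariants
      = 18 + (Finset.univ.filter (fun k : ↥K => (k : G) ^ 2 = -1)).card := by
  haveI : Invertible ((Fintype.card ↥K : ℂ)) :=
    invertibleOfNonzero (by rw [hcard]; norm_num)
  have h24 : ∀ k : ↥K, (k : G) ^ 24 = 1 := by
    intro k
    have h := pow_card_eq_one (x := k)
    rw [hcard] at h
    have h2 : ((k ^ 24 : ↥K) : G) = ((1 : ↥K) : G) := by rw [h]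
    rwa [SubmonoidClass.coe_pow, OneMemClass.coe_one] at h2
  have havg := FDRep.average_char_eq_finrank_invariants
      (FDRep.of (Representation.linHom (ρ.comp K.subtype) (σ.comp K.subtype)))
  rw [show (FDRep.of (Representation.linHom (ρ.comp K.subtype) (σ.comp K.subtype))).ρ
      = Representation.linHom (ρ.comp K.subtype) (σ.comp K.subtype) from FDRep.of_ρ' _] at havg
  have hchar : ∀ k : ↥K,
      (FDRep.of (Representation.linHom (ρ.comp K.subtype) (σ.comp K.subtype))).character k
        = if (k : G) = 1 ∨ (k : G) = -1 then 9 else if (k : G) ^ 2 = -1 then 1 else 0 := by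
    intro k
    have h := FDRep.char_linHom (FDRep.of (ρ.comp K.subtype)) (FDRep.of (σ.comp K.subtype)) k
    rw [show (FDRep.of (ρ.comp K.subtype)).ρ = ρ.comp K.subtype from FDRep.of_ρ' _,
      show (FDRep.of (σ.comp K.subtype)).ρ = σ.comp K.subtype from FDRep.of_ρ' _] at h
    rw [h]
    have h2 : (FDRep.of (ρ.comp K.subtype)).character k⁻¹
        = LinearMap.trace ℂ V3 (ρ ((k : G)⁻¹)) := rfl
    have h3 : (FDRep.of (σ.comp K.subtype)).character k
        = LinearMap.trace ℂ V3 (σ (k : G)) := rfl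
    rw [h2, h3]
    exact chi_pair ρ σ hρ hσ (k : G) (h24 k)
  rw [Finset.sum_congr rfl (fun k _ => hchar k)] at havg
  set n := (Finset.univ.filter (fun k : ↥K => (k : G) ^ 2 = -1)).card with hn
  have hm1 : (-1 : G) ∈ K := by
    obtain ⟨x, hx⟩ := exists_prime_orderOf_dvd_card 2 (by rw [hcard]; norm_num)
    have hx2 : x ^ 2 = 1 := by
      have h := pow_orderOf_eq_one x
      rwa [hx] at h
    have hx1 : x ≠ 1 := by
      intro h; rw [h, orderOf_one] at hx; norm_num at hx
    have hcoe : (x : G) ^ 2 = 1 := by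
      have := congrArg (Subtype.val) hx2
      rwa [SubmonoidClass.coe_pow, OneMemClass.coe_one] at this
    rcases hF1 _ hcoe with h | h
    · exact absurd (Subtype.ext h) hx1
    · rw [← h]; exact x.2
  have hsum : (∑ k : ↥K, if (k : G) = 1 ∨ (k : G) = -1 then (9:ℂ)
      else if (k : G) ^ 2 = -1 then 1 else 0) = 18 + (n : ℂ) := by
    rw [Finset.sum_ite]
    have hfilter1 : Finset.univ.filter (fun k : ↥K => (k : G) = 1 ∨ (k : G) = -1)
        = {(1 : ↥K), ⟨-1, hm1⟩} := by
      ext k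
      simp only [Finset.mem_filter, Finset.mem_univ, true_and, Finset.mem_insert,
        Finset.mem_singleton]
      constructor
      · rintro (h | h)
        · left; exact Subtype.ext h
        · right; exact Subtype.ext h
      · rintro (rfl | rfl)
        · left; rfl
        · right; rfl
    have hcard1 : (Finset.univ.filter (fun k : ↥K => (k : G) = 1 ∨ (k : G) = -1)).card = 2 := by
      rw [hfilter1, Finset.card_insert_of_notMem, Finset.card_singleton]
      simp only [Finset.mem_singleton]
      intro h
      exact hne1 (congrArg Subtype.val h)
    have hfilter2 : (Finset.univ.filter (fun k : ↥K => ¬((k : G) = 1 ∨ (k : G) = -1))).filter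
          (fun k : ↥K => (k : G) ^ 2 = -1)
        = Finset.univ.filter (fun k : ↥K => (k : G) ^ 2 = -1) := by
      rw [Finset.filter_filter]
      apply Finset.filter_congr
      intro k _
      constructor
      · exact fun h => h.2
      · intro h
        refine ⟨?_, h⟩
        rintro (h1 | h1)
        · rw [h1, one_pow] at h; exact hne1 h
        · rw [h1, hn1sq] at h; exact hne1 h
    rw [Finset.sum_const, hcard1, Finset.sum_boole, hfilter2, ← hn]
    simp only [nsmul_eq_mul]
    push_cast
    ring
  rw [hsum] at havg
  rw [inv_mul_eq_iff_eq_mul₀ (by rw [Nat.card_eq_fintype_card, hcard]; norm_num), ← smul_eq_mul,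
    Nat.card_eq_fintype_card] at havg
  rw [hcard] at havg
  have hnat : ((18 + n : ℕ) : ℂ) = ((24 * Module.finrank ℂ
      (Representation.linHom (ρ.comp K.subtype) (σ.comp K.subtype)).invariants : ℕ) : ℂ) := by
    push_cast
    rw [havg, smul_eq_mul]
    norm_num
  exact (Nat.cast_injective hnat).symm


lemma id_mem_invariants {H : Type*} [Group H] (τ : Representation ℂ H V3) :
    LinearMap.id ∈ (Representation.linHom τ τ).invariants := by
  intro h
  rw [Representation.linHom_apply, LinearMap.id_comp]
  show τ h * τ h⁻¹ = LinearMap.id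
  rw [← map_mul, mul_inv_cancel, map_one]
  rfl

lemma id_ne_zero_sub {H : Type*} [Group H] (τ : Representation ℂ H V3) :
    (⟨LinearMap.id, id_mem_invariants τ⟩ : (Representation.linHom τ τ).invariants) ≠ 0 := by
  intro hcon
  obtain ⟨w, hw⟩ := exists_ne (0 : V3)
  apply hw
  have := congrArg (fun z : (Representation.linHom τ τ).invariants =>
    (z : Module.End ℂ V3) w) hcon
  simpa using this

lemma irr_of_finrank_one {H : Type*} [Group H] [Fintype H] (τ : Representation ℂ H V3)
    (hfr : Module.finrank ℂ (Representation.linHom τ τ).invariants = 1) :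
    IsIrreducibleRep τ := by
  refine ⟨inferInstance, ?_⟩
  intro p hp
  by_contra hcon
  push_neg at hcon
  obtain ⟨hpbot, hptop⟩ := hcon
  obtain ⟨q, hq⟩ := Submodule.exists_isCompl p
  set π₀ : Module.End ℂ V3 := p.subtype ∘ₗ (p.projectionOnto q hq) with hπ₀
  have hπ₀mem : ∀ x : V3, π₀ x ∈ p := fun x => (p.projectionOnto q hq x).2
  have hπ₀id : ∀ x ∈ p, π₀ x = x := by
    intro x hx
    have := Submodule.linearProjOfIsCompl_apply_left hq ⟨x, hx⟩
    simp only [hπ₀, LinearMap.comp_apply]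
    rw [this]
    rfl
  have hc0 : ((Fintype.card H : ℂ)) ≠ 0 := Nat.cast_ne_zero.2 Fintype.card_ne_zero
  set π : Module.End ℂ V3 :=
    (Fintype.card H : ℂ)⁻¹ • ∑ k : H, τ k * π₀ * τ k⁻¹ with hπ
  have hπmem : π ∈ (Representation.linHom τ τ).invariants := by
    intro h
    rw [Representation.linHom_apply]
    have hcomp : (τ h) ∘ₗ π ∘ₗ (τ h⁻¹) = τ h * π * τ h⁻¹ := rfl
    rw [hcomp, hπ, mul_smul_comm, smul_mul_assoc]
    congr 1
    rw [Finset.mul_sum, Finset.sum_mul]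
    refine Fintype.sum_equiv (Equiv.mulLeft h) _ _ ?_
    intro k
    show τ h * (τ k * π₀ * τ k⁻¹) * τ h⁻¹ = τ (h*k) * π₀ * τ ((h*k)⁻¹)
    rw [map_mul, mul_inv_rev, map_mul]
    simp only [mul_assoc]
  have hπp : ∀ x : V3, π x ∈ p := by
    intro x
    rw [hπ]
    simp only [LinearMap.smul_apply, LinearMap.sum_apply]
    refine Submodule.smul_mem _ _ (Submodule.sum_mem _ fun k _ => ?_)
    rw [Module.End.mul_apply, Module.End.mul_apply]
    exact hp k _ (hπ₀mem _)
  have hπidp : ∀ x ∈ p, π x = x := by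
    intro x hx
    rw [hπ]
    simp only [LinearMap.smul_apply, LinearMap.sum_apply]
    have hterm : ∀ k : H, (τ k * π₀ * τ k⁻¹) x = x := by
      intro k
      rw [Module.End.mul_apply, Module.End.mul_apply, hπ₀id _ (hp k⁻¹ x hx),
        ← Module.End.mul_apply (τ k) (τ k⁻¹), ← map_mul, mul_inv_cancel, map_one,
        Module.End.one_apply]
    rw [Finset.sum_congr rfl (fun k _ => hterm k), Finset.sum_const, Finset.card_univ,
      ← Nat.cast_smul_eq_nsmul ℂ, smul_smul, inv_mul_cancel₀ hc0, one_smul]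
  obtain ⟨cc, hcc⟩ := (finrank_eq_one_iff_of_nonzero'
    (⟨LinearMap.id, id_mem_invariants τ⟩ : (Representation.linHom τ τ).invariants)
    (id_ne_zero_sub τ)).1 hfr ⟨π, hπmem⟩
  have hπeq : π = cc • LinearMap.id := by
    have := congrArg Subtype.val hcc
    simpa using this.symm
  obtain ⟨v, hvmem, hv0⟩ := (Submodule.ne_bot_iff p).1 hpbot
  have hccv : cc • v = v := by
    have h1 := hπidp v hvmem
    rw [hπeq] at h1
    simpa using h1
  have hcc1 : cc = 1 := by
    have h2 : (cc - 1) • v = 0 := by rw [sub_smul, one_smul, hccv, sub_self]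
    rcases smul_eq_zero.1 h2 with h3 | h3
    · linear_combination h3
    · exact absurd h3 hv0
  apply hptop
  rw [eq_top_iff]
  intro x _
  have hx := hπp x
  rw [hπeq, hcc1] at hx
  simpa using hx

lemma iso_of_invariants {H : Type*} [Group H] (τ υ : Representation ℂ H V3)
    (hτ : IsIrreducibleRep τ) (hυ : IsIrreducibleRep υ)
    (hfr : 0 < Module.finrank ℂ (Representation.linHom τ υ).invariants) :
    RepIso τ υ := by
  have hnt : Nontrivial (Representation.linHom τ υ).invariants :=
    Module.finrank_pos_iff.1 hfr
  obtain ⟨x, hx⟩ := exists_ne (0 : (Representation.linHom τ υ).invariants)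
  have hφ0 : (x : Module.End ℂ V3) ≠ 0 := fun h => hx (Subtype.ext h)
  have hcomm : ∀ (h : H) (v : V3), (x : Module.End ℂ V3) (τ h v) = υ h ((x : Module.End ℂ V3) v) := by
    intro h v
    have hm := x.2 h
    rw [Representation.linHom_apply] at hm
    have h2 := congrArg (fun f : Module.End ℂ V3 => f (τ h v)) hm
    simp only [LinearMap.comp_apply] at h2
    rw [← Module.End.mul_apply (τ h⁻¹) (τ h), ← map_mul, inv_mul_cancel, map_one,
      Module.End.one_apply] at h2
    exact h2.symm
  have hker : LinearMap.ker (x : Module.End ℂ V3) = ⊥ := by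
    have hsub : IsSubrep τ (LinearMap.ker (x : Module.End ℂ V3)) := by
      intro h v hv
      rw [LinearMap.mem_ker] at hv ⊢
      rw [hcomm, hv, map_zero]
    rcases hτ.2 _ hsub with h | h
    · exact h
    · exact absurd (LinearMap.ker_eq_top.1 h) hφ0
  have hrange : LinearMap.range (x : Module.End ℂ V3) = ⊤ := by
    have hsub : IsSubrep υ (LinearMap.range (x : Module.End ℂ V3)) := by
      intro h v hv
      obtain ⟨u, rfl⟩ := LinearMap.mem_range.1 hv
      exact LinearMap.mem_range.2 ⟨τ h u, hcomm h u⟩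
    rcases hυ.2 _ hsub with h | h
    · exact absurd (LinearMap.range_eq_bot.1 h) hφ0
    · exact h
  exact ⟨LinearEquiv.ofBijective (x : Module.End ℂ V3)
    ⟨LinearMap.ker_eq_bot.1 hker, LinearMap.range_eq_top.1 hrange⟩,
    fun g v => hcomm g v⟩

theorem master (K : Subgroup G) (hK : Nat.card ↥K = 24) (ρ σ : Representation ℂ G V3)
    (hρ : IsIrreducibleRep ρ) (hσ : IsIrreducibleRep σ) :
    IsIrreducibleRep (ρ.comp K.subtype) ∧ IsIrreducibleRep (σ.comp K.subtype) ∧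
      RepIso (ρ.comp K.subtype) (σ.comp K.subtype) := by
  classical
  haveI : Fintype ↥K := Fintype.ofFinite ↥K
  have hcard : Fintype.card ↥K = 24 := by rw [← Nat.card_eq_fintype_card, hK]
  have hρρ := key K hcard ρ ρ hρ hρ
  have hσσ := key K hcard σ σ hσ hσ
  have hρσ := key K hcard ρ σ hρ hσ
  have hd1 : 1 ≤ Module.finrank ℂ
      (Representation.linHom (ρ.comp K.subtype) (ρ.comp K.subtype)).invariants := by
    have hnt : Nontrivial (Representation.linHom (ρ.comp K.subtype)
        (ρ.comp K.subtype)).invariants :=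
      nontrivial_of_ne _ 0 (id_ne_zero_sub (ρ.comp K.subtype))
    exact Module.finrank_pos_iff (R := ℂ) |>.2 hnt
  have hσd1 : 1 ≤ Module.finrank ℂ
      (Representation.linHom (σ.comp K.subtype) (σ.comp K.subtype)).invariants := by
    have hnt : Nontrivial (Representation.linHom (σ.comp K.subtype)
        (σ.comp K.subtype)).invariants :=
      nontrivial_of_ne _ 0 (id_ne_zero_sub (σ.comp K.subtype))
    exact Module.finrank_pos_iff (R := ℂ) |>.2 hnt
  have hn_le : (Finset.univ.filter (fun k : ↥K => (k : G) ^ 2 = -1)).card ≤ 24 := by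
    calc (Finset.univ.filter (fun k : ↥K => (k : G) ^ 2 = -1)).card
        ≤ Finset.univ.card := Finset.card_filter_le _ _
    _ = 24 := by rw [Finset.card_univ, hcard]
  have hdρ : Module.finrank ℂ
      (Representation.linHom (ρ.comp K.subtype) (ρ.comp K.subtype)).invariants = 1 := by omega
  have hn6 : (Finset.univ.filter (fun k : ↥K => (k : G) ^ 2 = -1)).card = 6 := by omega
  have hdσ : Module.finrank ℂ
      (Representation.linHom (σ.comp K.subtype) (σ.comp K.subtype)).invariants = 1 := by omega
  have hdρσ : 0 < Module.finrank ℂ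
      (Representation.linHom (ρ.comp K.subtype) (σ.comp K.subtype)).invariants := by omega
  have hirr1 := irr_of_finrank_one (ρ.comp K.subtype) hdρ
  have hirr2 := irr_of_finrank_one (σ.comp K.subtype) hdσ
  exact ⟨hirr1, hirr2, iso_of_invariants _ _ hirr1 hirr2 hdρσ⟩

end Master

section Transport

variable {H : Type*} [Group H]

lemma repIso_symm {V W : Type*} [AddCommGroup V] [Module ℂ V] [AddCommGroup W] [Module ℂ W]
    {ρ : Representation ℂ H V} {σ : Representation ℂ H W} (h : RepIso ρ σ) : RepIso σ ρ := by
  obtain ⟨e, he⟩ := h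
  refine ⟨e.symm, fun g w => ?_⟩
  apply e.injective
  rw [e.apply_symm_apply, he, e.apply_symm_apply]

lemma repIso_trans {U V W : Type*} [AddCommGroup U] [Module ℂ U] [AddCommGroup V] [Module ℂ V]
    [AddCommGroup W] [Module ℂ W]
    {ρ : Representation ℂ H U} {σ : Representation ℂ H V} {τ : Representation ℂ H W}
    (h1 : RepIso ρ σ) (h2 : RepIso σ τ) : RepIso ρ τ := by
  obtain ⟨e, he⟩ := h1
  obtain ⟨f, hf⟩ := h2
  exact ⟨e.trans f, fun g v => by simp [LinearEquiv.trans_apply, he, hf]⟩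

lemma irr_congr {V W : Type*} [AddCommGroup V] [Module ℂ V] [AddCommGroup W] [Module ℂ W]
    {ρ : Representation ℂ H V} {σ : Representation ℂ H W} (h : RepIso ρ σ)
    (hρ : IsIrreducibleRep ρ) : IsIrreducibleRep σ := by
  obtain ⟨e, he⟩ := h
  haveI : Nontrivial V := hρ.1
  refine ⟨Equiv.nontrivial e.symm.toEquiv, ?_⟩
  intro q hq
  have hsub : IsSubrep ρ (q.comap (e : V →ₗ[ℂ] W)) := by
    intro g v hv
    rw [Submodule.mem_comap, LinearEquiv.coe_coe] at hv ⊢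
    rw [he]
    exact hq g _ hv
  rcases hρ.2 _ hsub with hbot | htop
  · left
    rw [eq_bot_iff]
    intro x hx
    have : e.symm x ∈ q.comap (e : V →ₗ[ℂ] W) := by
      rw [Submodule.mem_comap, LinearEquiv.coe_coe, e.apply_symm_apply]
      exact hx
    rw [hbot, Submodule.mem_bot] at this
    rw [Submodule.mem_bot]
    calc x = e (e.symm x) := (e.apply_symm_apply x).symm
    _ = e 0 := by rw [this]
    _ = 0 := map_zero e
  · right
    rw [eq_top_iff]
    intro x _
    have : e.symm x ∈ q.comap (e : V →ₗ[ℂ] W) := htop ▸ Submodule.mem_top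
    rw [Submodule.mem_comap, LinearEquiv.coe_coe, e.apply_symm_apply] at this
    exact this

/-- Conjugating a representation by a linear equivalence onto `V3`. -/
noncomputable def conjRep {V : Type*} [AddCommGroup V] [Module ℂ V]
    (θ : Representation ℂ H V) (e : V ≃ₗ[ℂ] V3) : Representation ℂ H V3 where
  toFun g := e.conj (θ g)
  map_one' := by
    show e.conj (θ 1) = 1
    rw [map_one θ]
    exact e.conj_id
  map_mul' g h := by
    show e.conj (θ (g * h)) = e.conj (θ g) * e.conj (θ h)
    rw [map_mul θ]
    show e.conj (θ g ∘ₗ θ h) = _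
    rw [e.conj_comp]
    rfl

lemma conjRep_iso {V : Type*} [AddCommGroup V] [Module ℂ V]
    (θ : Representation ℂ H V) (e : V ≃ₗ[ℂ] V3) : RepIso θ (conjRep θ e) := by
  refine ⟨e, fun g v => ?_⟩
  show e (θ g v) = e.conj (θ g) (e v)
  rw [LinearEquiv.conj_apply]
  simp

end Transport


end SL25Aux

theorem res_three_dim_to_order24_irreducible_and_iso
    (K : Subgroup (Matrix.SpecialLinearGroup (Fin 2) (ZMod 5))) (hK : Nat.card K = 24)
    {V W : Type*} [AddCommGroup V] [Module ℂ V] [AddCommGroup W] [Module ℂ W]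
    (θ : Representation ℂ (Matrix.SpecialLinearGroup (Fin 2) (ZMod 5)) V)
    (θ' : Representation ℂ (Matrix.SpecialLinearGroup (Fin 2) (ZMod 5)) W)
    (hdV : Module.finrank ℂ V = 3) (hdW : Module.finrank ℂ W = 3)
    (hθ : IsIrreducibleRep θ) (hθ' : IsIrreducibleRep θ') :
    IsIrreducibleRep (θ.comp K.subtype) ∧ IsIrreducibleRep (θ'.comp K.subtype) ∧
      RepIso (θ.comp K.subtype) (θ'.comp K.subtype) := by
  classical
  haveI : Module.Finite ℂ V := Module.finite_of_finrank_pos (by rw [hdV]; norm_num)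
  haveI : Module.Finite ℂ W := Module.finite_of_finrank_pos (by rw [hdW]; norm_num)
  let e : V ≃ₗ[ℂ] SL25Aux.V3 := (Module.finBasisOfFinrankEq ℂ V hdV).equivFun
  let f : W ≃ₗ[ℂ] SL25Aux.V3 := (Module.finBasisOfFinrankEq ℂ W hdW).equivFun
  set ρ := SL25Aux.conjRep θ e with hρdef
  set σ := SL25Aux.conjRep θ' f with hσdef
  have hiso1 : RepIso θ ρ := SL25Aux.conjRep_iso θ e
  have hiso2 : RepIso θ' σ := SL25Aux.conjRep_iso θ' f
  have hρirr : IsIrreducibleRep ρ := SL25Aux.irr_congr hiso1 hθ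
  have hσirr : IsIrreducibleRep σ := SL25Aux.irr_congr hiso2 hθ'
  obtain ⟨i1, i2, i3⟩ := SL25Aux.master K hK ρ σ hρirr hσirr
  -- restrictions are isomorphic via the same equivalences
  have hres1 : RepIso (θ.comp K.subtype) (ρ.comp K.subtype) := by
    obtain ⟨e', he'⟩ := hiso1
    exact ⟨e', fun g v => he' (K.subtype g) v⟩
  have hres2 : RepIso (θ'.comp K.subtype) (σ.comp K.subtype) := by
    obtain ⟨f', hf'⟩ := hiso2
    exact ⟨f', fun g v => hf' (K.subtype g) v⟩
  refine ⟨SL25Aux.irr_congr (SL25Aux.repIso_symm hres1) i1,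
    SL25Aux.irr_congr (SL25Aux.repIso_symm hres2) i2, ?_⟩
  exact SL25Aux.repIso_trans hres1 (SL25Aux.repIso_trans i3 (SL25Aux.repIso_symm hres2))
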